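/- Let G₁ and G₂ be sub-σ-fields of σ(X) such that Y ⊥⊥ X | G₁ and Y ⊥⊥ X | G₂, and such that the class of G₁-measurable functions and the class of G₂-measurable functions are both complete (i.e., for i = 1, 2, every Gᵢ-measurable f ∈ L²(μ) with μ[f|σ(Y)] = 0 μ-a.e. satisfies f = 0 μ-a.e.). Then for every f ∈ L²(μ): f is μ-a.e. equal to a G₁-measurable function if and only if f is μ-a.e. equal to a G₂-measurable function. -/

import Mathlib

open MeasureTheory ProbabilityTheory
open scoped NNReal ENNReal

/-- `Y ⊥⊥ X | G` : conditional independence of `Y` and `X` given a sub-σ-field `G`,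
as defined in the paper: for all `A ∈ σ(X)` and `B ∈ σ(Y)`,
`μ[1_{A∩B}|G] = μ[1_A|G] ⬝ μ[1_B|G]` a.e.  The ambient σ-field `mΩ` is explicit. -/
def CondIndepSigma {Ω : Type*} (mΩ : MeasurableSpace Ω) (μ : Measure Ω)
    (mX mY G : MeasurableSpace Ω) : Prop :=
  ∀ A : Set Ω, MeasurableSet[mX] A → ∀ B : Set Ω, MeasurableSet[mY] B →
    condExp G (m₀ := mΩ) μ ((A ∩ B).indicator (fun _ => (1 : ℝ))) =ᵐ[μ]
      fun ω => (condExp G (m₀ := mΩ) μ (A.indicator (fun _ => (1 : ℝ)))) ω *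
        (condExp G (m₀ := mΩ) μ (B.indicator (fun _ => (1 : ℝ)))) ω

section Aux

variable {Ω : Type*} {mΩ : MeasurableSpace Ω} {μ : Measure Ω} [IsProbabilityMeasure μ]

/-- Product of two `L²` functions is integrable. -/
lemma aux_integrable_mul {f g : Ω → ℝ} (hf : MemLp f 2 μ) (hg : MemLp g 2 μ) :
    Integrable (f * g) μ := by
  have h : MemLp (f • g) 1 μ :=
    hg.smul (φ := f) hf (hpqr := ⟨by rw [inv_one]; exact ENNReal.inv_two_add_inv_two⟩)
  exact memLp_one_iff_integrable.mp h


lemma aux_intOn {f : Ω → ℝ} (hf : Integrable f μ) (s : Set Ω) : IntegrableOn f s μ :=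
  hf.integrableOn

lemma aux_ind_int {C : Set Ω} (hC : MeasurableSet[mΩ] C) :
    Integrable (C.indicator (fun _ => (1 : ℝ))) μ :=
  (integrable_const (1 : ℝ)).indicator hC

lemma aux_ind_aesm {C : Set Ω} (hC : MeasurableSet[mΩ] C) :
    AEStronglyMeasurable (C.indicator (fun _ => (1 : ℝ))) μ :=
  (aux_ind_int hC).aestronglyMeasurable

lemma aux_intOn_zero (s : Set Ω) : IntegrableOn (0 : Ω → ℝ) s μ :=
  (integrable_const (0 : ℝ)).integrableOn

/-- Conditional expectation preserves `L²`. -/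
lemma aux_memℒp_two_condexp {m : MeasurableSpace Ω} (hm : m ≤ mΩ) {f : Ω → ℝ}
    (hf : MemLp f 2 μ) : MemLp (μ[f|m]) 2 μ := by
  have heq : (condExpL2 ℝ ℝ hm (hf.toLp f) : Ω → ℝ) =ᵐ[μ] μ[f|m] := by
    refine ae_eq_condExp_of_forall_setIntegral_eq hm (hf.integrable one_le_two)
      (fun s _ hμs => integrableOn_condExpL2_of_measure_ne_top hm hμs.ne _)
      (fun s hs hμs => ?_) (aestronglyMeasurable_condExpL2 hm _)
    rw [integral_condExpL2_eq hm _ hs hμs.ne]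
    exact integral_congr_ae (ae_restrict_of_ae hf.coeFn_toLp)
  exact (Lp.memLp _).ae_eq heq

lemma aux_setIntegral_eq_mul_indicator {B : Set Ω} (hB : MeasurableSet[mΩ] B) (h : Ω → ℝ) :
    ∫ x in B, h x ∂μ = ∫ x, h x * B.indicator (fun _ => (1 : ℝ)) x ∂μ := by
  rw [← integral_indicator hB]
  congr 1; ext x; by_cases hx : x ∈ B <;> simp [hx]

/-- For `k` `G`-measurable, `∫ k ⬝ μ[h|G] = ∫ k ⬝ h`. -/
lemma aux_integral_mul_condexp {G : MeasurableSpace Ω} (hG : G ≤ mΩ) {k h : Ω → ℝ}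
    (hk : StronglyMeasurable[G] k) (hh : Integrable h μ) (hkh : Integrable (k * h) μ) :
    ∫ x, k x * (μ[h|G]) x ∂μ = ∫ x, k x * h x ∂μ := by
  have h1 : μ[k * h|G] =ᵐ[μ] k * μ[h|G] := condExp_mul_of_stronglyMeasurable_left hk hkh hh
  calc ∫ x, k x * (μ[h|G]) x ∂μ = ∫ x, (μ[k * h|G]) x ∂μ := (integral_congr_ae h1).symm
    _ = ∫ x, (k * h) x ∂μ := integral_condExp hG
    _ = ∫ x, k x * h x ∂μ := rfl

/-- Under conditional independence, `μ[1_B|mX] = μ[1_B|G]` for `B ∈ mY`. -/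
lemma aux_condexp_indicator_eq {mX mY G : MeasurableSpace Ω} (hXle : mX ≤ mΩ)
    (hYle : mY ≤ mΩ) (hG : G ≤ mX)
    (hCI : CondIndepSigma mΩ μ mX mY G) {B : Set Ω} (hB : MeasurableSet[mY] B) :
    μ[B.indicator (fun _ => (1 : ℝ))|mX] =ᵐ[μ] μ[B.indicator (fun _ => (1 : ℝ))|G] := by
  have hGΩ : G ≤ mΩ := hG.trans hXle
  have hBΩ : MeasurableSet[mΩ] B := hYle B hB
  have hind : ∀ C : Set Ω, MeasurableSet[mΩ] C →
      Integrable (C.indicator (fun _ => (1 : ℝ))) μ :=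
    fun _ hC => aux_ind_int hC
  refine (ae_eq_condExp_of_forall_setIntegral_eq hXle (hind B hBΩ)
    (fun s _ _ => aux_intOn integrable_condExp s) (fun s hs _ => ?_)
    ((stronglyMeasurable_condExp.mono hG).aestronglyMeasurable)).symm
  have hsΩ : MeasurableSet[mΩ] s := hXle s hs
  set k : Ω → ℝ := μ[B.indicator (fun _ => (1 : ℝ))|G] with hk
  have hkbdd : ∀ᵐ x ∂μ, |k x| ≤ ((1 : ℝ≥0) : ℝ) := by
    refine ae_bdd_condExp_of_ae_bdd (Filter.Eventually.of_forall fun x => ?_)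
    by_cases hx : x ∈ B <;> simp [hx]
  have hkm : AEStronglyMeasurable[mΩ] k μ := by
    rw [hk]; exact (stronglyMeasurable_condExp.mono hGΩ).aestronglyMeasurable
  have hknorm : ∀ᵐ x ∂μ, ‖k x‖ ≤ (1 : ℝ) := by
    filter_upwards [hkbdd] with x hx using by simpa using hx
  -- Integrable (k * 1_s)
  have hks : Integrable (k * s.indicator (fun _ => (1 : ℝ))) μ := by
    exact Integrable.bdd_mul (f := k) (g := s.indicator fun _ => (1 : ℝ)) (c := 1)
      (hind s hsΩ) hkm hknorm
  have h1 : ∫ x in s, k x ∂μ = ∫ x, k x * s.indicator (fun _ => (1 : ℝ)) x ∂μ :=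
    aux_setIntegral_eq_mul_indicator hsΩ k
  have h2 : ∫ x, k x * s.indicator (fun _ => (1 : ℝ)) x ∂μ
      = ∫ x, k x * (μ[s.indicator (fun _ => (1 : ℝ))|G]) x ∂μ :=
    (aux_integral_mul_condexp hGΩ stronglyMeasurable_condExp (hind s hsΩ) hks).symm
  have h3 : ∫ x, k x * (μ[s.indicator (fun _ => (1 : ℝ))|G]) x ∂μ
      = ∫ x, (μ[(s ∩ B).indicator (fun _ => (1 : ℝ))|G]) x ∂μ := by
    refine (integral_congr_ae ?_).symm
    filter_upwards [hCI s hs B hB] with x hx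
    rw [hx, mul_comm]
  have h4 : ∫ x, (μ[(s ∩ B).indicator (fun _ => (1 : ℝ))|G]) x ∂μ
      = ∫ x, (s ∩ B).indicator (fun _ => (1 : ℝ)) x ∂μ :=
    integral_condExp hGΩ
  have h5 : ∫ x, (s ∩ B).indicator (fun _ => (1 : ℝ)) x ∂μ
      = ∫ x in s, B.indicator (fun _ => (1 : ℝ)) x ∂μ := by
    rw [aux_setIntegral_eq_mul_indicator hsΩ]
    congr 1; ext x
    by_cases hxs : x ∈ s <;> by_cases hxB : x ∈ B <;>
      simp [Set.indicator_apply, hxs, hxB, Set.mem_inter_iff]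
  rw [h1, h2, h3, h4, h5]

/-- Under conditional independence with `G ≤ mX`, for `mX`-measurable integrable `h`,
`∫_B h = ∫_B μ[h|G]` for all `B ∈ mY`. -/
lemma aux_setIntegral_condexp_eq {mX mY G : MeasurableSpace Ω} (hXle : mX ≤ mΩ)
    (hYle : mY ≤ mΩ) (hG : G ≤ mX)
    (hCI : CondIndepSigma mΩ μ mX mY G) {h : Ω → ℝ}
    (hhm : StronglyMeasurable[mX] h) (hh : Integrable h μ)
    {B : Set Ω} (hB : MeasurableSet[mY] B) :
    ∫ x in B, h x ∂μ = ∫ x in B, (μ[h|G]) x ∂μ := by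
  have hGΩ : G ≤ mΩ := hG.trans hXle
  have hBΩ : MeasurableSet[mΩ] B := hYle B hB
  have hindB : Integrable (B.indicator (fun _ => (1 : ℝ))) μ := aux_ind_int hBΩ
  set k : Ω → ℝ := μ[B.indicator (fun _ => (1 : ℝ))|G] with hkdef
  have hkbdd : ∀ᵐ x ∂μ, |k x| ≤ ((1 : ℝ≥0) : ℝ) := by
    refine ae_bdd_condExp_of_ae_bdd (Filter.Eventually.of_forall fun x => ?_)
    by_cases hx : x ∈ B <;> simp [hx]
  have hkm : AEStronglyMeasurable[mΩ] k μ := by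
    rw [hkdef]; exact (stronglyMeasurable_condExp.mono hGΩ).aestronglyMeasurable
  have hknorm : ∀ᵐ x ∂μ, ‖k x‖ ≤ (1 : ℝ) := by
    filter_upwards [hkbdd] with x hx using by simpa using hx
  have hindnorm : ∀ᵐ x ∂μ, ‖B.indicator (fun _ => (1 : ℝ)) x‖ ≤ (1 : ℝ) := by
    refine Filter.Eventually.of_forall fun x => ?_
    by_cases hx : x ∈ B <;> simp [hx]
  have hmul_int : ∀ g : Ω → ℝ, Integrable g μ → AEStronglyMeasurable[mΩ] g μ →
      Integrable (g * B.indicator (fun _ => (1 : ℝ))) μ := by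
    intro g hg hgm
    refine (Integrable.bdd_mul (f := B.indicator fun _ => (1 : ℝ)) (g := g) (c := 1)
      hg (aux_ind_aesm hBΩ) hindnorm).congr ?_
    exact Filter.Eventually.of_forall fun x => mul_comm _ _
  have hkmul : ∀ g : Ω → ℝ, Integrable g μ → Integrable (k * g) μ := by
    intro g hg
    exact Integrable.bdd_mul (f := k) (g := g) (c := 1) hg hkm hknorm
  have hcondind := aux_condexp_indicator_eq hXle hYle hG hCI hB
  -- key computation for any mX-strongly measurable integrable function g:
  have key : ∀ g : Ω → ℝ, StronglyMeasurable[mX] g → Integrable g μ →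
      ∫ x in B, g x ∂μ = ∫ x, k x * g x ∂μ := by
    intro g hgm hg
    rw [aux_setIntegral_eq_mul_indicator hBΩ]
    have h1 : ∫ x, g x * B.indicator (fun _ => (1 : ℝ)) x ∂μ
        = ∫ x, g x * (μ[B.indicator (fun _ => (1 : ℝ))|mX]) x ∂μ :=
      (aux_integral_mul_condexp hXle hgm hindB
        (hmul_int g hg (hgm.mono hXle).aestronglyMeasurable)).symm
    rw [h1]
    refine integral_congr_ae ?_
    filter_upwards [hcondind] with x hx
    rw [hx, mul_comm]
  have e1 : ∫ x in B, h x ∂μ = ∫ x, k x * h x ∂μ := key h hhm hh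
  have e2 : ∫ x in B, (μ[h|G]) x ∂μ = ∫ x, k x * (μ[h|G]) x ∂μ :=
    key (μ[h|G]) (stronglyMeasurable_condExp.mono hG) integrable_condExp
  rw [e1, e2, aux_integral_mul_condexp hGΩ stronglyMeasurable_condExp hh (hkmul h hh)]

/-- Main auxiliary lemma: one direction of the theorem, stated abstractly. -/
lemma aux_main {mX mY G₁ G₂ : MeasurableSpace Ω} (hXle : mX ≤ mΩ) (hYle : mY ≤ mΩ)
    (hG₁ : G₁ ≤ mX) (hCI₁ : CondIndepSigma mΩ μ mX mY G₁)
    (hcomplete₁ : ∀ f : Ω → ℝ, Measurable[G₁] f → MemLp f 2 μ →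
      (μ[f|mY] =ᵐ[μ] 0) → f =ᵐ[μ] 0)
    (hG₂ : G₂ ≤ mX) (hCI₂ : CondIndepSigma mΩ μ mX mY G₂)
    {g₁ : Ω → ℝ} (hg₁m : Measurable[G₁] g₁) (hg₁2 : MemLp g₁ 2 μ) :
    ∃ g₂ : Ω → ℝ, Measurable[G₂] g₂ ∧ g₁ =ᵐ[μ] g₂ := by
  have hG₁Ω : G₁ ≤ mΩ := hG₁.trans hXle
  have hG₂Ω : G₂ ≤ mΩ := hG₂.trans hXle
  have hg₁sm : StronglyMeasurable[G₁] g₁ := hg₁m.stronglyMeasurable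
  have hg₁int : Integrable g₁ μ := hg₁2.integrable one_le_two
  set g₂ : Ω → ℝ := μ[g₁|G₂] with hg₂def
  have hg₂sm : StronglyMeasurable[G₂] g₂ := stronglyMeasurable_condExp
  have hg₂2 : MemLp g₂ 2 μ := aux_memℒp_two_condexp hG₂Ω hg₁2
  have hg₂int : Integrable g₂ μ := integrable_condExp
  set g₁' : Ω → ℝ := μ[g₂|G₁] with hg₁'def
  have hg₁'sm : StronglyMeasurable[G₁] g₁' := stronglyMeasurable_condExp
  have hg₁'2 : MemLp g₁' 2 μ := aux_memℒp_two_condexp hG₁Ω hg₂2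
  have hg₁'int : Integrable g₁' μ := integrable_condExp
  -- Step C: μ[g₁ - g₁'|mY] = 0, hence g₁ = g₁' a.e. by completeness
  have hsetint : ∀ B : Set Ω, MeasurableSet[mY] B →
      ∫ x in B, g₁ x ∂μ = ∫ x in B, g₁' x ∂μ := by
    intro B hB
    calc ∫ x in B, g₁ x ∂μ = ∫ x in B, g₂ x ∂μ :=
          aux_setIntegral_condexp_eq hXle hYle hG₂ hCI₂ (hg₁sm.mono hG₁) hg₁int hB
      _ = ∫ x in B, g₁' x ∂μ :=
          aux_setIntegral_condexp_eq hXle hYle hG₁ hCI₁ (hg₂sm.mono hG₂) hg₂int hB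
  have hcondY : μ[g₁ - g₁'|mY] =ᵐ[μ] 0 := by
    refine ((ae_eq_condExp_of_forall_setIntegral_eq hYle (hg₁int.sub hg₁'int)
      (fun s _ _ => aux_intOn_zero s) (fun s hs _ => ?_)
      ((@stronglyMeasurable_zero Ω ℝ mY _ _).aestronglyMeasurable))).symm
    have : ∫ x in s, (g₁ - g₁') x ∂μ = ∫ x in s, g₁ x ∂μ - ∫ x in s, g₁' x ∂μ :=
      integral_sub (aux_intOn hg₁int s) (aux_intOn hg₁'int s)
    rw [this, hsetint s hs, sub_self]
    simp
  have hzero₁ : g₁ - g₁' =ᵐ[μ] 0 :=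
    hcomplete₁ _ (hg₁m.sub hg₁'sm.measurable) (hg₁2.sub hg₁'2) hcondY
  have hq : g₁ =ᵐ[μ] g₁' := by
    filter_upwards [hzero₁] with x hx
    have : g₁ x - g₁' x = 0 := hx
    linarith
  -- Step D: d = g₁ - g₂ satisfies μ[d|G₁] = 0 and μ[d|G₂] = 0
  set d : Ω → ℝ := g₁ - g₂ with hddef
  have hd2 : MemLp d 2 μ := hg₁2.sub hg₂2
  have hdint : Integrable d μ := hg₁int.sub hg₂int
  have hcd₁ : μ[d|G₁] =ᵐ[μ] 0 := by
    have h1 : μ[d|G₁] =ᵐ[μ] μ[g₁|G₁] - μ[g₂|G₁] := condExp_sub hg₁int hg₂int _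
    have h2 : μ[g₁|G₁] = g₁ := condExp_of_stronglyMeasurable hG₁Ω hg₁sm hg₁int
    refine h1.trans ?_
    rw [h2, ← hg₁'def]
    filter_upwards [hq] with x hx
    simp [Pi.sub_apply, hx]
  have hcd₂ : μ[d|G₂] =ᵐ[μ] 0 := by
    have h1 : μ[d|G₂] =ᵐ[μ] μ[g₁|G₂] - μ[g₂|G₂] := condExp_sub hg₁int hg₂int _
    have h2 : μ[g₂|G₂] = g₂ := condExp_of_stronglyMeasurable hG₂Ω hg₂sm hg₂int
    refine h1.trans ?_
    rw [h2, ← hg₂def]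
    filter_upwards with x
    simp [Pi.sub_apply]
  -- ∫ g ⬝ d = 0 whenever g is G-measurable L² and μ[d|G] = 0
  have hint_zero : ∀ (G : MeasurableSpace Ω), G ≤ mΩ → ∀ g : Ω → ℝ,
      StronglyMeasurable[G] g → MemLp g 2 μ → (μ[d|G] =ᵐ[μ] 0) →
      ∫ x, g x * d x ∂μ = 0 := by
    intro G hGle g hgsm hg2 hcd
    have hgd : Integrable (g * d) μ := aux_integrable_mul hg2 hd2
    have h1 : μ[g * d|G] =ᵐ[μ] g * μ[d|G] := condExp_mul_of_stronglyMeasurable_left hgsm hgd hdint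
    have h2 : μ[g * d|G] =ᵐ[μ] 0 := by
      refine h1.trans ?_
      filter_upwards [hcd] with x hx
      simp [Pi.mul_apply, hx]
    calc ∫ x, g x * d x ∂μ = ∫ x, (g * d) x ∂μ := rfl
      _ = ∫ x, (μ[g * d|G]) x ∂μ := (integral_condExp hGle).symm
      _ = ∫ x, (0 : Ω → ℝ) x ∂μ := integral_congr_ae h2
      _ = 0 := by simp
  have hz₁ : ∫ x, g₁ x * d x ∂μ = 0 := hint_zero G₁ hG₁Ω g₁ hg₁sm hg₁2 hcd₁
  have hz₂ : ∫ x, g₂ x * d x ∂μ = 0 := hint_zero G₂ hG₂Ω g₂ hg₂sm hg₂2 hcd₂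
  -- conclude ∫ d² = 0
  have hdd : Integrable (fun x => d x * d x) μ := aux_integrable_mul hd2 hd2
  have hsq : ∫ x, d x * d x ∂μ = 0 := by
    have h1 : ∀ x, d x * d x = g₁ x * d x - g₂ x * d x := by
      intro x; simp [hddef, Pi.sub_apply]; ring
    calc ∫ x, d x * d x ∂μ = ∫ x, (g₁ x * d x - g₂ x * d x) ∂μ := by
          refine integral_congr_ae (Filter.Eventually.of_forall h1)
      _ = ∫ x, g₁ x * d x ∂μ - ∫ x, g₂ x * d x ∂μ :=
          integral_sub (aux_integrable_mul hg₁2 hd2) (aux_integrable_mul hg₂2 hd2)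
      _ = 0 := by rw [hz₁, hz₂, sub_self]
  have hdzero : d =ᵐ[μ] 0 := by
    have h1 : (fun x => d x * d x) =ᵐ[μ] 0 :=
      (integral_eq_zero_iff_of_nonneg (fun x => mul_self_nonneg (d x)) hdd).mp hsq
    filter_upwards [h1] with x hx
    have : d x * d x = 0 := hx
    exact mul_self_eq_zero.mp this
  refine ⟨g₂, hg₂sm.measurable, ?_⟩
  filter_upwards [hdzero] with x hx
  have : g₁ x - g₂ x = 0 := hx
  linarith

end Aux

/-- Uniqueness of complete and sufficient dimension reduction classes: two complete SDR
classes consist (a.e.) of the same square-integrable functions. -/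
theorem complete_sufficient_class_unique
    {Ω EX EY : Type*} [mΩ : MeasurableSpace Ω] [mEX : MeasurableSpace EX]
    [mEY : MeasurableSpace EY]
    (μ : Measure Ω) [IsProbabilityMeasure μ]
    (X : Ω → EX) (Y : Ω → EY) (hX : Measurable X) (hY : Measurable Y)
    (G₁ : MeasurableSpace Ω) (hG₁ : G₁ ≤ MeasurableSpace.comap X mEX)
    (hCI₁ : CondIndepSigma mΩ μ (MeasurableSpace.comap X mEX) (MeasurableSpace.comap Y mEY) G₁)
    (hcomplete₁ : ∀ f : Ω → ℝ, Measurable[G₁] f → MemLp f 2 μ →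
      (μ[f|MeasurableSpace.comap Y mEY] =ᵐ[μ] 0) → f =ᵐ[μ] 0)
    (G₂ : MeasurableSpace Ω) (hG₂ : G₂ ≤ MeasurableSpace.comap X mEX)
    (hCI₂ : CondIndepSigma mΩ μ (MeasurableSpace.comap X mEX) (MeasurableSpace.comap Y mEY) G₂)
    (hcomplete₂ : ∀ f : Ω → ℝ, Measurable[G₂] f → MemLp f 2 μ →
      (μ[f|MeasurableSpace.comap Y mEY] =ᵐ[μ] 0) → f =ᵐ[μ] 0)
    (f : Ω → ℝ) (hf2 : MemLp f 2 μ) :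
    (∃ g : Ω → ℝ, Measurable[G₁] g ∧ f =ᵐ[μ] g) ↔
      (∃ g : Ω → ℝ, Measurable[G₂] g ∧ f =ᵐ[μ] g) := by
  have hXle : MeasurableSpace.comap X mEX ≤ mΩ := hX.comap_le
  have hYle : MeasurableSpace.comap Y mEY ≤ mΩ := hY.comap_le
  constructor
  · rintro ⟨g, hgm, hfg⟩
    obtain ⟨g₂, hg₂m, hgg₂⟩ :=
      aux_main hXle hYle hG₁ hCI₁ hcomplete₁ hG₂ hCI₂ hgm (hf2.ae_eq hfg)
    exact ⟨g₂, hg₂m, hfg.trans hgg₂⟩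
  · rintro ⟨g, hgm, hfg⟩
    obtain ⟨g₁, hg₁m, hgg₁⟩ :=
      aux_main hXle hYle hG₂ hCI₂ hcomplete₂ hG₁ hCI₁ hgm (hf2.ae_eq hfg)
    exact ⟨g₁, hg₁m, hfg.trans hgg₁⟩
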